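/- For all integers d ≥ 2 and n ≥ d^{d−1}, the edge metric dimension of the d-dimensional grid P_n^d equals d. -/

import Mathlib

open SimpleGraph

/-- `S` is a resolving set for `G`: any two distinct vertices are distinguished
by their graph distance to some landmark in `S`. -/
def IsResolvingSet {V : Type*} (G : SimpleGraph V) (S : Set V) : Prop :=
  ∀ u v : V, u ≠ v → ∃ w ∈ S, G.dist u w ≠ G.dist v w

/-- The metric dimension of `G`: the least size of a (finite) resolving set. -/
noncomputable def metricDim {V : Type*} (G : SimpleGraph V) : ℕ :=
  sInf {k | ∃ S : Finset V, IsResolvingSet G ↑S ∧ S.card = k}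

/-- Distance from an edge `e = {u,v}` to a vertex `w`: `min (d(u,w)) (d(v,w))`. -/
noncomputable def edgeDist {V : Type*} (G : SimpleGraph V) (e : Sym2 V) (w : V) : ℕ :=
  Sym2.lift ⟨fun u v => min (G.dist u w) (G.dist v w), fun u v => by simp [min_comm]⟩ e

/-- `S` is an edge resolving set for `G`: any two distinct edges are distinguished
by their distance to some landmark in `S`. -/
def IsEdgeResolvingSet {V : Type*} (G : SimpleGraph V) (S : Set V) : Prop :=
  ∀ e ∈ G.edgeSet, ∀ f ∈ G.edgeSet, e ≠ f → ∃ w ∈ S, edgeDist G e w ≠ edgeDist G f w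

/-- The edge metric dimension of `G`: the least size of a (finite) edge resolving set. -/
noncomputable def edgeMetricDim {V : Type*} (G : SimpleGraph V) : ℕ :=
  sInf {k | ∃ S : Finset V, IsEdgeResolvingSet G ↑S ∧ S.card = k}

/-- `G` contains `H` as a subgraph: there is an injective graph homomorphism `H → G`. -/
def Contains {V W : Type*} (G : SimpleGraph V) (H : SimpleGraph W) : Prop :=
  ∃ f : H →g G, Function.Injective f

/-- The graph `D_k` on `ℤ_{≥0}^k`: distinct points are adjacent iff they differ
by at most 1 in every coordinate. -/
def Dgraph (k : ℕ) : SimpleGraph (Fin k → ℕ) where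
  Adj x y := x ≠ y ∧ ∀ i, x i ≤ y i + 1 ∧ y i ≤ x i + 1
  symm := ⟨fun _x _y h => ⟨h.1.symm, fun i => ⟨(h.2 i).2, (h.2 i).1⟩⟩⟩
  loopless := ⟨fun _x h => h.1 rfl⟩

/-- The `d`-dimensional grid `P_n^d` on vertex set `{0,...,n-1}^d`: two vertices are
adjacent iff they agree in all but one coordinate, in which they differ by exactly 1. -/
def gridGraph (n d : ℕ) : SimpleGraph (Fin d → Fin n) where
  Adj x y := ∃ i, ((x i : ℕ) + 1 = (y i : ℕ) ∨ (y i : ℕ) + 1 = (x i : ℕ)) ∧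
    ∀ j, j ≠ i → x j = y j
  symm := by
    constructor
    rintro x y ⟨i, hi, hj⟩
    exact ⟨i, hi.symm, fun j h => (hj j h).symm⟩
  loopless := by
    constructor
    rintro x ⟨i, hi, _⟩
    rcases hi with h | h <;> omega

namespace Grid

variable {n d : ℕ}

abbrev Vtx (n d : ℕ) := Fin d → Fin n

def del (a b : ℕ) : ℕ := (a - b) + (b - a)

def L1 (x y : Vtx n d) : ℕ := ∑ j, del (x j) (y j)

lemma L1_eq_zero {x y : Vtx n d} (h : L1 x y = 0) : x = y := by
  funext j
  have h0 := Finset.sum_eq_zero_iff.mp h j (Finset.mem_univ j)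
  have := (x j).isLt
  have := (y j).isLt
  exact Fin.ext (by simp [del] at h0; omega)

lemma L1_self (x : Vtx n d) : L1 x x = 0 := by simp [L1, del]

lemma adj_L1 {x y : Vtx n d} (h : (gridGraph n d).Adj x y) : L1 x y = 1 := by
  obtain ⟨i, hi, hj⟩ := h
  rw [L1, ← Finset.add_sum_erase _ _ (Finset.mem_univ i)]
  have h1 : del (x i) (y i) = 1 := by simp only [del]; omega
  have h2 : ∑ j ∈ Finset.univ.erase i, del (x j) (y j) = 0 := by
    refine Finset.sum_eq_zero fun j hj' => ?_
    rw [hj j (Finset.ne_of_mem_erase hj')]; simp [del]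
  omega

lemma L1_triangle (x z y : Vtx n d) : L1 x y ≤ L1 x z + L1 z y := by
  rw [L1, L1, L1, ← Finset.sum_add_distrib]
  refine Finset.sum_le_sum fun j _ => ?_
  simp only [del]; omega

lemma walk_le {x y : Vtx n d} (p : (gridGraph n d).Walk x y) : L1 x y ≤ p.length := by
  induction p with
  | nil => simp [L1_self]
  | @cons a b c h p ih =>
    have := L1_triangle a b c
    have := adj_L1 h
    simp only [Walk.length_cons]
    omega

lemma exists_walk : ∀ (N : ℕ) (x y : Vtx n d), L1 x y = N →
    ∃ p : (gridGraph n d).Walk x y, p.length = N := by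
  intro N
  induction N with
  | zero =>
    intro x y h
    obtain rfl := L1_eq_zero h
    exact ⟨Walk.nil, rfl⟩
  | succ N ih =>
    intro x y h
    have hex : ∃ j, del (x j) (y j) ≠ 0 := by
      by_contra hc
      push_neg at hc
      have : L1 x y = 0 := Finset.sum_eq_zero fun j _ => hc j
      omega
    obtain ⟨j, hj⟩ := hex
    have hxn := (x j).isLt
    have hyn := (y j).isLt
    rcases Nat.lt_or_ge (x j : ℕ) (y j : ℕ) with hlt | hge
    · set m : Fin n := ⟨(x j : ℕ) + 1, by omega⟩ with hm
      set x' : Vtx n d := Function.update x j m with hx'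
      have hadj : (gridGraph n d).Adj x x' := by
        refine ⟨j, Or.inl ?_, fun k hk => ?_⟩
        · simp [hx', hm]
        · simp [hx', Function.update_of_ne hk]
      have hL : L1 x' y = N := by
        have e1 : L1 x y = del (x j) (y j) +
            ∑ k ∈ Finset.univ.erase j, del (x k) (y k) := by
          rw [L1]; exact (Finset.add_sum_erase _ _ (Finset.mem_univ j)).symm
        have e2 : L1 x' y = del (x' j) (y j) +
            ∑ k ∈ Finset.univ.erase j, del (x' k) (y k) := by
          rw [L1]; exact (Finset.add_sum_erase _ _ (Finset.mem_univ j)).symm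
        have e3 : ∑ k ∈ Finset.univ.erase j, del (x' k) (y k)
            = ∑ k ∈ Finset.univ.erase j, del (x k) (y k) := by
          refine Finset.sum_congr rfl fun k hk => ?_
          rw [hx', Function.update_of_ne (Finset.ne_of_mem_erase hk)]
        have e4 : (x' j : ℕ) = (x j : ℕ) + 1 := by simp [hx', hm]
        have e5 : del (x' j) (y j) = del (x j) (y j) - 1 := by
          simp only [del, e4]; omega
        have e6 : del (x j) (y j) ≥ 1 := by simp only [del]; omega
        omega
      obtain ⟨p, hp⟩ := ih x' y hL
      exact ⟨Walk.cons hadj p, by simp [hp]⟩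
    · have hne : (x j : ℕ) ≠ (y j : ℕ) := by simp [del] at hj; omega
      set m : Fin n := ⟨(x j : ℕ) - 1, by omega⟩ with hm
      set x' : Vtx n d := Function.update x j m with hx'
      have hadj : (gridGraph n d).Adj x x' := by
        refine ⟨j, Or.inr ?_, fun k hk => ?_⟩
        · simp only [hx', Function.update_self, hm]; omega
        · simp [hx', Function.update_of_ne hk]
      have hL : L1 x' y = N := by
        have e1 : L1 x y = del (x j) (y j) +
            ∑ k ∈ Finset.univ.erase j, del (x k) (y k) := by
          rw [L1]; exact (Finset.add_sum_erase _ _ (Finset.mem_univ j)).symm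
        have e2 : L1 x' y = del (x' j) (y j) +
            ∑ k ∈ Finset.univ.erase j, del (x' k) (y k) := by
          rw [L1]; exact (Finset.add_sum_erase _ _ (Finset.mem_univ j)).symm
        have e3 : ∑ k ∈ Finset.univ.erase j, del (x' k) (y k)
            = ∑ k ∈ Finset.univ.erase j, del (x k) (y k) := by
          refine Finset.sum_congr rfl fun k hk => ?_
          rw [hx', Function.update_of_ne (Finset.ne_of_mem_erase hk)]
        have e4 : (x' j : ℕ) = (x j : ℕ) - 1 := by simp [hx', hm]
        have e5 : del (x' j) (y j) = del (x j) (y j) - 1 := by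
          simp only [del, e4]; omega
        have e6 : del (x j) (y j) ≥ 1 := by simp only [del]; omega
        omega
      obtain ⟨p, hp⟩ := ih x' y hL
      exact ⟨Walk.cons hadj p, by simp [hp]⟩

lemma dist_eq (x y : Vtx n d) : (gridGraph n d).dist x y = L1 x y := by
  obtain ⟨p, hp⟩ := exists_walk (L1 x y) x y rfl
  refine le_antisymm (hp ▸ dist_le p) ?_
  obtain ⟨q, hq⟩ := p.reachable.exists_walk_length_eq_dist
  rw [← hq]
  exact walk_le q

lemma edgeDist_mk {V : Type*} (G : SimpleGraph V) (a b w : V) :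
    edgeDist G s(a, b) w = min (G.dist a w) (G.dist b w) := rfl

def inc (x : Vtx n d) (c : Fin d) : Vtx n d :=
  Function.update x c ⟨min ((x c : ℕ) + 1) (n - 1), by have := (x c).isLt; omega⟩

lemma inc_self (x : Vtx n d) (c : Fin d) (h : (x c : ℕ) + 1 < n) :
    ((inc x c c : Fin n) : ℕ) = (x c : ℕ) + 1 := by simp [inc]; omega

lemma inc_ne (x : Vtx n d) (c : Fin d) {j : Fin d} (hj : j ≠ c) :
    inc x c j = x j := by simp [inc, Function.update_of_ne hj]

lemma adj_inc (x : Vtx n d) (c : Fin d) (h : (x c : ℕ) + 1 < n) :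
    (gridGraph n d).Adj x (inc x c) :=
  ⟨c, Or.inl (by rw [inc_self x c h]), fun j hj => (inc_ne x c hj).symm⟩

lemma sum_inc (x : Vtx n d) (c : Fin d) (h : (x c : ℕ) + 1 < n) :
    ∑ j, ((inc x c j : Fin n) : ℕ) = (∑ j, ((x j : Fin n) : ℕ)) + 1 := by
  have e1 : ∑ j, ((inc x c j : Fin n) : ℕ)
      = ((inc x c c : Fin n) : ℕ) + ∑ j ∈ Finset.univ.erase c, ((inc x c j : Fin n) : ℕ) :=
    (Finset.add_sum_erase _ _ (Finset.mem_univ c)).symm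
  have e2 : ∑ j, ((x j : Fin n) : ℕ)
      = ((x c : Fin n) : ℕ) + ∑ j ∈ Finset.univ.erase c, ((x j : Fin n) : ℕ) :=
    (Finset.add_sum_erase _ _ (Finset.mem_univ c)).symm
  have e3 : ∑ j ∈ Finset.univ.erase c, ((inc x c j : Fin n) : ℕ)
      = ∑ j ∈ Finset.univ.erase c, ((x j : Fin n) : ℕ) :=
    Finset.sum_congr rfl fun j hj => by rw [inc_ne x c (Finset.ne_of_mem_erase hj)]
  rw [e1, e2, e3, inc_self x c h]
  omega

lemma edge_rep {e : Sym2 (Fin d → Fin n)} (he : e ∈ (gridGraph n d).edgeSet) :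
    ∃ (x : Vtx n d) (c : Fin d), ((x c : ℕ) + 1 < n) ∧ e = s(x, inc x c) := by
  induction e with
  | _ a b =>
    rw [mem_edgeSet] at he
    obtain ⟨i, hcase, hrest⟩ := he
    rcases hcase with hab | hba
    · have h : (a i : ℕ) + 1 < n := by rw [hab]; exact (b i).isLt
      refine ⟨a, i, h, ?_⟩
      have : b = inc a i := by
        funext j
        by_cases hj : j = i
        · subst hj; exact Fin.ext (by rw [inc_self a j h]; omega)
        · rw [inc_ne a i hj, (hrest j hj).symm]
      rw [this]
    · have h : (b i : ℕ) + 1 < n := by rw [hba]; exact (a i).isLt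
      refine ⟨b, i, h, ?_⟩
      have : a = inc b i := by
        funext j
        by_cases hj : j = i
        · subst hj; exact Fin.ext (by rw [inc_self b j h]; omega)
        · rw [inc_ne b i hj, hrest j hj]
      rw [this, Sym2.eq_swap]

def lm (hn : 2 ≤ n) (i : Fin d) : Vtx n d :=
  fun j => if (i : ℕ) = 0 ∨ j ≠ i then ⟨0, by omega⟩ else ⟨n - 1, by omega⟩

lemma L1_lm_zero (hn : 2 ≤ n) (hd : 0 < d) (x : Vtx n d) :
    L1 x (lm hn (⟨0, hd⟩ : Fin d)) = ∑ j, ((x j : Fin n) : ℕ) := by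
  refine Finset.sum_congr rfl fun j _ => ?_
  simp [lm, del]

lemma L1_lm (hn : 2 ≤ n) {i : Fin d} (hi : (i : ℕ) ≠ 0) (x : Vtx n d) :
    L1 x (lm hn i) + 2 * ((x i : Fin n) : ℕ) = (n - 1) + ∑ j, ((x j : Fin n) : ℕ) := by
  have e1 : L1 x (lm hn i)
      = del (x i) (lm hn i i) + ∑ j ∈ Finset.univ.erase i, del (x j) (lm hn i j) := by
    rw [L1]; exact (Finset.add_sum_erase _ _ (Finset.mem_univ i)).symm
  have e2 : ∑ j, ((x j : Fin n) : ℕ)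
      = ((x i : Fin n) : ℕ) + ∑ j ∈ Finset.univ.erase i, ((x j : Fin n) : ℕ) :=
    (Finset.add_sum_erase _ _ (Finset.mem_univ i)).symm
  have e3 : ∑ j ∈ Finset.univ.erase i, del (x j) (lm hn i j)
      = ∑ j ∈ Finset.univ.erase i, ((x j : Fin n) : ℕ) := by
    refine Finset.sum_congr rfl fun j hj => ?_
    have : (((lm hn i j : Fin n)) : ℕ) = 0 := by
      simp [lm, Finset.ne_of_mem_erase hj]
    simp [del, this]
  have e4 : (((lm hn i i : Fin n)) : ℕ) = n - 1 := by
    simp [lm, hi]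
  have e5 : del (x i) (lm hn i i) = (n - 1) - ((x i : Fin n) : ℕ) := by
    have := (x i).isLt
    simp only [del, e4]; omega
  have := (x i).isLt
  omega

lemma edgeDist_lm_zero (hn : 2 ≤ n) (hd : 0 < d) (x : Vtx n d) (c : Fin d) (h : (x c : ℕ) + 1 < n) :
    edgeDist (gridGraph n d) s(x, inc x c) (lm hn (⟨0, hd⟩ : Fin d)) = ∑ j, ((x j : Fin n) : ℕ) := by
  rw [edgeDist_mk, dist_eq, dist_eq, L1_lm_zero hn hd, L1_lm_zero hn hd, sum_inc x c h]
  omega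

lemma edgeDist_lm (hn : 2 ≤ n) {i : Fin d} (hi : (i : ℕ) ≠ 0) (x : Vtx n d) (c : Fin d) (h : (x c : ℕ) + 1 < n) :
    edgeDist (gridGraph n d) s(x, inc x c) (lm hn i) + 2 * ((x i : Fin n) : ℕ)
      + (if c = i then 1 else 0) = (n - 1) + ∑ j, ((x j : Fin n) : ℕ) := by
  rw [edgeDist_mk, dist_eq, dist_eq]
  have hA := L1_lm hn hi x
  have hB := L1_lm hn hi (inc x c)
  have hS := sum_inc x c h
  have hle : ((x i : Fin n) : ℕ) ≤ ∑ j, ((x j : Fin n) : ℕ) :=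
    Finset.single_le_sum (f := fun j => ((x j : Fin n) : ℕ)) (fun j _ => Nat.zero_le _) (Finset.mem_univ i)
  by_cases hci : c = i
  · subst hci
    have h1 : ((inc x c c : Fin n) : ℕ) = (x c : ℕ) + 1 := inc_self x c h
    rw [h1] at hB
    rw [if_pos rfl]
    omega
  · have h1 : ((inc x c i : Fin n) : ℕ) = (x i : ℕ) := by rw [inc_ne x c (Ne.symm hci)]
    rw [h1] at hB
    rw [if_neg hci]
    have := (x i).isLt
    omega

lemma lm_at_self (hn : 2 ≤ n) {i : Fin d} (hi : (i : ℕ) ≠ 0) :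
    ((lm hn i i : Fin n) : ℕ) = n - 1 := by simp [lm, hi]

lemma lm_at_ne (hn : 2 ≤ n) {i j : Fin d} (hj : j ≠ i) :
    ((lm hn i j : Fin n) : ℕ) = 0 := by simp [lm, hj]

lemma lm_inj (hn : 2 ≤ n) : Function.Injective (lm (d := d) hn) := by
  intro i i' hii
  by_contra hne
  have hval : ∀ j, ((lm hn i j : Fin n) : ℕ) = ((lm hn i' j : Fin n) : ℕ) :=
    fun j => by rw [hii]
  by_cases hi : (i : ℕ) = 0
  · have hi' : (i' : ℕ) ≠ 0 := fun hh => hne (Fin.val_injective (hi.trans hh.symm))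
    have h1 := hval i'
    rw [lm_at_self hn hi', lm_at_ne hn (fun hh => hne hh.symm)] at h1
    omega
  · by_cases hi' : (i' : ℕ) = 0
    · have h1 := hval i
      rw [lm_at_self hn hi, lm_at_ne hn (fun hh => hne hh)] at h1
      omega
    · have h1 := hval i
      rw [lm_at_self hn hi, lm_at_ne hn (fun hh => hne hh)] at h1
      omega

theorem upper (hn : 2 ≤ n) (hd : 0 < d) :
    ∃ S : Finset (Vtx n d), IsEdgeResolvingSet (gridGraph n d) ↑S ∧ S.card = d := by
  refine ⟨Finset.image (lm hn) Finset.univ, ?_, by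
    rw [Finset.card_image_of_injective _ (lm_inj hn), Finset.card_univ, Fintype.card_fin]⟩
  intro e he f hf hef
  by_contra hcon
  push_neg at hcon
  obtain ⟨x, c, h, rfl⟩ := edge_rep he
  obtain ⟨x', c', h', rfl⟩ := edge_rep hf
  have key : ∀ i : Fin d, edgeDist (gridGraph n d) s(x, inc x c) (lm hn i)
      = edgeDist (gridGraph n d) s(x', inc x' c') (lm hn i) := by
    intro i
    exact hcon (lm hn i) (by simp)
  have hz := key ⟨0, hd⟩
  rw [edgeDist_lm_zero hn hd x c h, edgeDist_lm_zero hn hd x' c' h'] at hz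
  have hkey : ∀ i : Fin d, (i : ℕ) ≠ 0 →
      2 * ((x i : Fin n) : ℕ) + (if c = i then 1 else 0)
        = 2 * ((x' i : Fin n) : ℕ) + (if c' = i then 1 else 0) := by
    intro i hi
    have h1 := edgeDist_lm hn hi x c h
    have h2 := edgeDist_lm hn hi x' c' h'
    have h3 := key i
    omega
  have hcc : c = c' := by
    by_cases hc0 : (c : ℕ) = 0
    · by_contra hner
      have hc'0 : (c' : ℕ) ≠ 0 := fun hh => hner (Fin.val_injective (hc0.trans hh.symm))
      have hk := hkey c' hc'0
      rw [if_pos rfl, if_neg hner] at hk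
      omega
    · have hk := hkey c hc0
      rw [if_pos rfl] at hk
      by_contra hner
      rw [if_neg (fun hh => hner hh.symm)] at hk
      omega
  subst hcc
  have hothers : ∀ j : Fin d, (j : ℕ) ≠ 0 → x j = x' j := by
    intro j hj
    have hk := hkey j hj
    by_cases hcj : c = j
    · rw [if_pos hcj] at hk
      exact Fin.ext (by omega)
    · rw [if_neg hcj] at hk
      exact Fin.ext (by omega)
  have hxx : x = x' := by
    funext j
    by_cases hj : (j : ℕ) = 0
    · have e2 : ∑ k, ((x k : Fin n) : ℕ)
          = ((x j : Fin n) : ℕ) + ∑ k ∈ Finset.univ.erase j, ((x k : Fin n) : ℕ) :=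
        (Finset.add_sum_erase _ _ (Finset.mem_univ j)).symm
      have e3 : ∑ k, ((x' k : Fin n) : ℕ)
          = ((x' j : Fin n) : ℕ) + ∑ k ∈ Finset.univ.erase j, ((x' k : Fin n) : ℕ) :=
        (Finset.add_sum_erase _ _ (Finset.mem_univ j)).symm
      have e4 : ∑ k ∈ Finset.univ.erase j, ((x k : Fin n) : ℕ)
          = ∑ k ∈ Finset.univ.erase j, ((x' k : Fin n) : ℕ) := by
        refine Finset.sum_congr rfl fun k hk => ?_
        have hk0 : (k : ℕ) ≠ 0 :=
          fun hh => (Finset.ne_of_mem_erase hk) (Fin.val_injective (hh.trans hj.symm))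
        rw [hothers k hk0]
      exact Fin.ext (by omega)
    · exact hothers j hj
  subst hxx
  exact hef rfl

lemma del_le (hn : 1 ≤ n) (a b : Fin n) : del (a : ℕ) (b : ℕ) ≤ n - 1 := by
  have := a.isLt; have := b.isLt; simp only [del]; omega

lemma erase_sum_le (hn : 1 ≤ n) (x w : Vtx n d) (c : Fin d) :
    ∑ j ∈ Finset.univ.erase c, del ((x j : Fin n) : ℕ) ((w j : Fin n) : ℕ)
      ≤ (d - 1) * (n - 1) := by
  calc ∑ j ∈ Finset.univ.erase c, del ((x j : Fin n) : ℕ) ((w j : Fin n) : ℕ)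
      ≤ ∑ _j ∈ Finset.univ.erase c, (n - 1) :=
        Finset.sum_le_sum fun j _ => del_le hn (x j) (w j)
    _ = (d - 1) * (n - 1) := by
        rw [Finset.sum_const, Finset.card_erase_of_mem (Finset.mem_univ c),
          Finset.card_univ, Fintype.card_fin, smul_eq_mul]

lemma edgeDist_lt (hn : 2 ≤ n) (x : Vtx n d) (c : Fin d) (h : (x c : ℕ) + 1 < n)
    (w : Vtx n d) : edgeDist (gridGraph n d) s(x, inc x c) w < d * (n - 1) := by
  obtain ⟨d', rfl⟩ : ∃ d', d = d' + 1 := ⟨d - 1, by have := c.pos; omega⟩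
  rw [edgeDist_mk, dist_eq, dist_eq]
  have e1 : L1 x w = del ((x c : Fin n) : ℕ) ((w c : Fin n) : ℕ)
      + ∑ j ∈ Finset.univ.erase c, del ((x j : Fin n) : ℕ) ((w j : Fin n) : ℕ) := by
    rw [L1]; exact (Finset.add_sum_erase _ _ (Finset.mem_univ c)).symm
  have e2 : L1 (inc x c) w = del ((inc x c c : Fin n) : ℕ) ((w c : Fin n) : ℕ)
      + ∑ j ∈ Finset.univ.erase c, del ((inc x c j : Fin n) : ℕ) ((w j : Fin n) : ℕ) := by
    rw [L1]; exact (Finset.add_sum_erase _ _ (Finset.mem_univ c)).symm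
  have e3 : ∑ j ∈ Finset.univ.erase c, del ((inc x c j : Fin n) : ℕ) ((w j : Fin n) : ℕ)
      = ∑ j ∈ Finset.univ.erase c, del ((x j : Fin n) : ℕ) ((w j : Fin n) : ℕ) :=
    Finset.sum_congr rfl fun j hj => by rw [inc_ne x c (Finset.ne_of_mem_erase hj)]
  have e4 := erase_sum_le (by omega) x w c
  have e5 : ((inc x c c : Fin n) : ℕ) = (x c : ℕ) + 1 := inc_self x c h
  have e6 : min (del ((x c : Fin n) : ℕ) ((w c : Fin n) : ℕ))
      (del ((x c : ℕ) + 1) ((w c : Fin n) : ℕ)) ≤ n - 2 := by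
    have := (w c).isLt
    simp only [del]
    omega
  have e7 : (d' + 1) * (n - 1) = d' * (n - 1) + (n - 1) := by ring
  have e8 : (d' + 1 - 1) * (n - 1) = d' * (n - 1) := by simp
  rw [e1, e2, e3, e5]
  rw [e8] at e4
  omega

def emb (hd : 2 ≤ d) (b : Fin 2) : Fin d := Fin.castLE hd b

lemma edge_inj (hn : 1 ≤ n) {x x' : Vtx n d} {c c' : Fin d}
    (h : (x c : ℕ) + 1 < n) (h' : (x' c' : ℕ) + 1 < n)
    (he : s(x, inc x c) = s(x', inc x' c')) : x = x' ∧ c = c' := by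
  rw [Sym2.eq_iff] at he
  rcases he with ⟨h1, h2⟩ | ⟨h1, h2⟩
  · subst h1
    refine ⟨rfl, ?_⟩
    by_contra hcc
    have e1 : ((inc x c c : Fin n) : ℕ) = (x c : ℕ) + 1 := inc_self x c h
    have e2 : inc x c' c = x c := inc_ne x c' hcc
    rw [h2] at e1
    rw [e2] at e1
    omega
  · exfalso
    have s1 : ∑ j, ((inc x' c' j : Fin n) : ℕ) = (∑ j, ((x' j : Fin n) : ℕ)) + 1 :=
      sum_inc x' c' h'
    have s2 : ∑ j, ((inc x c j : Fin n) : ℕ) = (∑ j, ((x j : Fin n) : ℕ)) + 1 :=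
      sum_inc x c h
    rw [← h1] at s1
    rw [h2] at s2
    omega

lemma card_slab (hn : 2 ≤ n) (hd : 1 ≤ d) (i0 : Fin d) :
    Fintype.card {u : Vtx n d // (u i0 : ℕ) < n - 1} = (n - 1) * n ^ (d - 1) := by
  have E : {u : Vtx n d // (u i0 : ℕ) < n - 1}
      ≃ {a : Fin n // (a : ℕ) < n - 1} × ({j : Fin d // j ≠ i0} → Fin n) :=
    { toFun := fun u => (⟨u.1 i0, u.2⟩, fun j => u.1 j.1)
      invFun := fun p => ⟨fun j => if hj : j = i0 then p.1.1 else p.2 ⟨j, hj⟩, by simpa using p.1.2⟩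
      left_inv := fun u => by
        apply Subtype.ext
        funext j
        by_cases hj : j = i0
        · subst hj; simp
        · simp [hj]
      right_inv := fun p => by
        refine Prod.ext ?_ ?_
        · apply Subtype.ext; simp
        · funext j; simp [j.2] }
  rw [Fintype.card_congr E, Fintype.card_prod, Fintype.card_fun]
  have c1 : Fintype.card {a : Fin n // (a : ℕ) < n - 1} = n - 1 := by
    have E2 : {a : Fin n // (a : ℕ) < n - 1} ≃ Fin (n - 1) :=
      { toFun := fun a => ⟨a.1.1, a.2⟩
        invFun := fun b => ⟨⟨b.1, by omega⟩, by exact b.2⟩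
        left_inv := fun a => by apply Subtype.ext; apply Fin.ext; rfl
        right_inv := fun b => rfl }
    rw [Fintype.card_congr E2, Fintype.card_fin]
  have c2 : Fintype.card {j : Fin d // j ≠ i0} = d - 1 := by
    rw [Fintype.card_subtype_compl, Fintype.card_subtype_eq, Fintype.card_fin]
  rw [c1, c2, Fintype.card_fin]

theorem lower (hd : 2 ≤ d) (hdn : d ^ (d - 1) ≤ n) (k : ℕ) (S : Finset (Vtx n d))
    (hres : IsEdgeResolvingSet (gridGraph n d) ↑S) (hcard : S.card = k) : d ≤ k := by
  have hn : 2 ≤ n := by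
    have h21 : 1 < d ^ (d - 1) := Nat.one_lt_pow (by omega) (by omega)
    omega
  by_contra hcon
  push_neg at hcon
  set D := d * (n - 1) with hD
  have hD1 : 1 ≤ D := by
    have : 1 ≤ n - 1 := by omega
    calc 1 = 1 * 1 := rfl
    _ ≤ d * (n - 1) := Nat.mul_le_mul (by omega) this
  -- the injection
  have hF : ∃ F : (Σ b : Fin 2, {u : Vtx n d // (u (emb hd b) : ℕ) < n - 1})
      → (↥S → Fin D), Function.Injective F := by
    refine ⟨fun t s => ⟨edgeDist (gridGraph n d) s(t.2.1, inc t.2.1 (emb hd t.1)) s.1,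
      edgeDist_lt hn t.2.1 (emb hd t.1) (by have := t.2.2; omega) s.1⟩, ?_⟩
    rintro ⟨b, u, hu⟩ ⟨b', u', hu'⟩ hFeq
    have hb : (u (emb hd b) : ℕ) + 1 < n := by omega
    have hb' : (u' (emb hd b') : ℕ) + 1 < n := by omega
    have heq : s(u, inc u (emb hd b)) = s(u', inc u' (emb hd b')) := by
      by_contra hne
      obtain ⟨w, hw, hwne⟩ := hres _ ((gridGraph n d).mem_edgeSet.mpr (adj_inc u (emb hd b) hb)) _
        ((gridGraph n d).mem_edgeSet.mpr (adj_inc u' (emb hd b') hb')) hne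
      have := congrFun hFeq ⟨w, hw⟩
      exact hwne (congrArg Fin.val this)
    obtain ⟨hxx, hcc⟩ := edge_inj (by omega) hb hb' heq
    have hbb : b = b' := by
      have := congrArg Fin.val hcc
      simp only [emb, Fin.coe_castLE] at this
      exact Fin.ext this
    subst hbb; subst hxx
    rfl
  have hineq : 2 * ((n - 1) * n ^ (d - 1)) ≤ D ^ k := by
    obtain ⟨F, hFinj⟩ := hF
    have hle : Fintype.card (Σ b : Fin 2, {u : Vtx n d // (u (emb hd b) : ℕ) < n - 1})
        ≤ Fintype.card (↥S → Fin D) :=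
      Fintype.card_le_of_injective F hFinj
    have hcardT : Fintype.card (Σ b : Fin 2, {u : Vtx n d // (u (emb hd b) : ℕ) < n - 1})
        = 2 * ((n - 1) * n ^ (d - 1)) := by
      rw [Fintype.card_sigma]
      have hb2 : ∀ b : Fin 2, Fintype.card {u : Vtx n d // (u (emb hd b) : ℕ) < n - 1}
          = (n - 1) * n ^ (d - 1) := fun b => card_slab hn (le_trans one_le_two hd) _
      rw [Finset.sum_congr rfl (fun b _ => hb2 b), Finset.sum_const, Finset.card_univ,
        Fintype.card_fin, smul_eq_mul]
    have hcardW : Fintype.card (↥S → Fin D) = D ^ k := by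
      rw [Fintype.card_fun, Fintype.card_fin, Fintype.card_coe, hcard]
    rw [hcardT, hcardW] at hle
    exact hle
  clear hF hres
  -- arithmetic contradiction
  have h1 : D ^ k ≤ D ^ (d - 1) := Nat.pow_le_pow_right hD1 (by omega)
  have h2 : D ^ (d - 1) = d ^ (d - 1) * (n - 1) ^ (d - 1) := by rw [hD, mul_pow]
  obtain ⟨d2, hd2⟩ : ∃ d2, d - 1 = d2 + 1 := ⟨d - 2, by omega⟩
  have h3 : (n - 1) ^ (d - 1) ≤ (n - 1) * n ^ d2 := by
    rw [hd2, pow_succ']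
    exact Nat.mul_le_mul_left _ (Nat.pow_le_pow_left (by omega) d2)
  have h4 : n ^ (d - 1) = n * n ^ d2 := by rw [hd2, pow_succ']
  have h5 : D ^ (d - 1) ≤ n * ((n - 1) * n ^ d2) := by
    rw [h2]
    exact Nat.mul_le_mul hdn h3
  have h6 : n * ((n - 1) * n ^ d2) = (n - 1) * n ^ (d - 1) := by rw [h4]; ring
  have h7 : 1 ≤ n ^ d2 := Nat.one_le_pow _ _ (by omega)
  have h8 : 0 < (n - 1) * n ^ (d - 1) :=
    Nat.mul_pos (by omega) (pow_pos (by omega) _)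
  omega

end Grid

/-- for `d ≥ 2` and `n ≥ d^(d-1)`, the edge metric dimension of the
grid `P_n^d` equals `d`. -/
theorem statement19 (d n : ℕ) (hd : 2 ≤ d) (h : d ^ (d - 1) ≤ n) :
    edgeMetricDim (gridGraph n d) = d := by
  have hn : 2 ≤ n := by
    have h21 : 1 < d ^ (d - 1) := Nat.one_lt_pow (by omega) (by omega)
    omega
  obtain ⟨S, hres, hcard⟩ := Grid.upper (n := n) (d := d) hn (by omega)
  apply le_antisymm
  · exact Nat.sInf_le ⟨S, hres, hcard⟩
  · refine le_csInf ⟨d, S, hres, hcard⟩ ?_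
    rintro k ⟨S', hres', hcard'⟩
    exact Grid.lower hd h k S' hres' hcard'
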